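/- arXiv:2106.06483 — 2 statements merged into one kernel-verified Lean document; each statement's English description precedes it below -/
import Mathlib

section
/- Let (X, μ) be a probability space, A a finite set, p : X → (probability distributions on A) a probability kernel, and f, f* : X × A → [0,1]. Let π : X → A be any policy. Then |E_{x∼μ}[f(x,π(x)) − f*(x,π(x))]| ≤ sqrt(E_{x∼μ}[1/p(π(x)|x)]) · sqrt(E_{x∼μ} E_{a∼p(·|x)}[(f(x,a) − f*(x,a))²]), assuming p(π(x)|x) > 0 for all x. -/
open MeasureTheory

/-- Direct-method policy evaluation error bound. -/
theorem direct_method_error_bound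
    {X : Type*} [MeasurableSpace X] (μ : Measure X) [IsProbabilityMeasure μ]
    {A : Type*} [Fintype A]
    (p : X → A → ℝ) (hpnn : ∀ x a, 0 ≤ p x a) (hpsum : ∀ x, ∑ a, p x a = 1)
    (f fstar : X → A → ℝ)
    (hf : ∀ x a, f x a ∈ Set.Icc (0 : ℝ) 1)
    (hfstar : ∀ x a, fstar x a ∈ Set.Icc (0 : ℝ) 1)
    (π : X → A)
    (hppos : ∀ x, 0 < p x (π x))
    (hint1 : Integrable (fun x => f x (π x) - fstar x (π x)) μ)
    (hint2 : Integrable (fun x => 1 / p x (π x)) μ)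
    (hint3 : Integrable (fun x => ∑ a, p x a * (f x a - fstar x a) ^ 2) μ) :
    |∫ x, (f x (π x) - fstar x (π x)) ∂μ| ≤
      Real.sqrt (∫ x, 1 / p x (π x) ∂μ) *
        Real.sqrt (∫ x, ∑ a, p x a * (f x a - fstar x a) ^ 2 ∂μ) := by
  set g : X → ℝ := fun x => f x (π x) - fstar x (π x) with hg
  set q : X → ℝ := fun x => p x (π x) with hq
  have hqpos : ∀ x, 0 < q x := hppos
  set u : X → ℝ := fun x => Real.sqrt (1 / q x) with hu
  set v : X → ℝ := fun x => Real.sqrt (q x) * |g x| with hv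
  have huv : ∀ x, u x * v x = |g x| := by
    intro x
    have : Real.sqrt (1 / q x) * Real.sqrt (q x) = 1 := by
      rw [← Real.sqrt_mul (one_div_nonneg.mpr (hqpos x).le)]
      rw [one_div_mul_cancel (hqpos x).ne', Real.sqrt_one]
    simp only [hu, hv, ← mul_assoc, this, one_mul]
  -- measurability
  have hmu : AEStronglyMeasurable u μ :=
    Real.continuous_sqrt.comp_aestronglyMeasurable hint2.1
  have hmq : AEStronglyMeasurable q μ := by
    have h : AEMeasurable (fun x => (1 / q x)⁻¹) μ := hint2.1.aemeasurable.inv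
    have h2 : AEMeasurable q μ := by simpa [one_div, inv_inv] using h
    exact h2.aestronglyMeasurable
  have hmg : AEStronglyMeasurable g μ := hint1.1
  have hmv : AEStronglyMeasurable v μ :=
    (Real.continuous_sqrt.comp_aestronglyMeasurable hmq).mul hmg.norm
  -- squares
  have hu2 : ∀ x, u x ^ 2 = 1 / q x := fun x =>
    Real.sq_sqrt (one_div_nonneg.mpr (hqpos x).le)
  have hv2 : ∀ x, v x ^ 2 = q x * g x ^ 2 := by
    intro x
    simp only [hv, mul_pow, Real.sq_sqrt (hqpos x).le, sq_abs]
  have hvle : ∀ x, q x * g x ^ 2 ≤ ∑ a, p x a * (f x a - fstar x a) ^ 2 := by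
    intro x
    exact Finset.single_le_sum (f := fun a => p x a * (f x a - fstar x a) ^ 2)
      (fun a _ => mul_nonneg (hpnn x a) (sq_nonneg _)) (Finset.mem_univ (π x))
  have hintv2 : Integrable (fun x => q x * g x ^ 2) μ := by
    refine hint3.mono' (hmq.mul (hmg.pow 2)) ?_
    filter_upwards with x
    rw [Real.norm_of_nonneg (mul_nonneg (hqpos x).le (sq_nonneg _))]
    exact hvle x
  -- Memℒp
  have hu_mem : MemLp u 2 μ := by
    rw [memLp_two_iff_integrable_sq hmu]
    exact hint2.congr (by filter_upwards with x using (hu2 x).symm)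
  have hv_mem : MemLp v 2 μ := by
    rw [memLp_two_iff_integrable_sq hmv]
    exact hintv2.congr (by filter_upwards with x using (hv2 x).symm)
  have h2 : ENNReal.ofReal (2 : ℝ) = 2 := by norm_num
  have hconj : Real.HolderConjugate 2 2 := Real.HolderConjugate.two_two
  have hCS := integral_mul_le_Lp_mul_Lq_of_nonneg hconj
    (f := u) (g := v)
    (Filter.Eventually.of_forall fun x => Real.sqrt_nonneg _)
    (Filter.Eventually.of_forall fun x => by positivity)
    (h2 ▸ hu_mem) (h2 ▸ hv_mem)
  have key : |∫ x, g x ∂μ| ≤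
      (∫ x, u x ^ (2:ℝ) ∂μ) ^ ((1:ℝ)/2) * (∫ x, v x ^ (2:ℝ) ∂μ) ^ ((1:ℝ)/2) := by
    calc |∫ x, g x ∂μ| ≤ ∫ x, |g x| ∂μ := by
          simpa [Real.norm_eq_abs] using norm_integral_le_integral_norm (μ := μ) g
      _ = ∫ x, u x * v x ∂μ := by
          refine integral_congr_ae ?_
          filter_upwards with x using (huv x).symm
      _ ≤ _ := hCS
  have e1 : (∫ x, u x ^ (2:ℝ) ∂μ) = ∫ x, 1 / q x ∂μ := by
    refine integral_congr_ae ?_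
    filter_upwards with x
    rw [Real.rpow_two, hu2 x]
  have e2 : (∫ x, v x ^ (2:ℝ) ∂μ) = ∫ x, q x * g x ^ 2 ∂μ := by
    refine integral_congr_ae ?_
    filter_upwards with x
    rw [Real.rpow_two, hv2 x]
  rw [e1, e2] at key
  calc |∫ x, g x ∂μ|
      ≤ (∫ x, 1 / q x ∂μ) ^ ((1:ℝ)/2) * (∫ x, q x * g x ^ 2 ∂μ) ^ ((1:ℝ)/2) := key
    _ = Real.sqrt (∫ x, 1 / q x ∂μ) * Real.sqrt (∫ x, q x * g x ^ 2 ∂μ) := by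
        rw [← Real.sqrt_eq_rpow, ← Real.sqrt_eq_rpow]
    _ ≤ Real.sqrt (∫ x, 1 / q x ∂μ) *
          Real.sqrt (∫ x, ∑ a, p x a * (f x a - fstar x a) ^ 2 ∂μ) := by
        exact mul_le_mul_of_nonneg_left
          (Real.sqrt_le_sqrt (integral_mono hintv2 hint3 hvle)) (Real.sqrt_nonneg _)
end

section
/- Fix real numbers a, b ≥ 1 with a ≥ b (representing γ_{m,1}/γ_{m,i}-type ratios). Define a sequence η_1 = a, and η_{k+1} = 2·max(b, sqrt(1 + b·η_k)) for k ≥ 1. Then for all k ≥ 1, η_k ≤ 8b·a^{1/2^{k−1}}. -/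
/-- Self-correction recursion decays double-exponentially. -/
theorem self_correction_recursion
    (a b : ℝ) (hb : 1 ≤ b) (hab : b ≤ a) (ha : 1 ≤ a)
    (η : ℕ → ℝ) (hη1 : η 1 = a)
    (hrec : ∀ k ≥ 1, η (k + 1) = 2 * max b (Real.sqrt (1 + b * η k))) :
    ∀ k ≥ 1, η k ≤ 8 * b * a ^ ((1 : ℝ) / 2 ^ (k - 1)) := by
  intro k hk
  induction k, hk using Nat.le_induction with
  | base =>
    have h1 : a ^ ((1 : ℝ) / 2 ^ (1 - 1)) = a := by norm_num
    rw [hη1, h1]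
    nlinarith
  | succ k hk ih =>
    have ha0 : (0:ℝ) ≤ a := by linarith
    have hat : 1 ≤ a ^ ((1:ℝ)/2^(k-1)) := by
      apply Real.one_le_rpow ha
      positivity
    have hek : (1:ℝ)/2^(k+1-1) = ((1:ℝ)/2^(k-1))/2 := by
      have h : k + 1 - 1 = (k-1)+1 := by omega
      rw [h, pow_succ]; ring
    set s := ((1:ℝ)/2^(k-1))/2 with hs
    have hs2 : a ^ ((1:ℝ)/2^(k-1)) = (a ^ s)^2 := by
      rw [← Real.rpow_natCast (a ^ s) 2, ← Real.rpow_mul ha0]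
      norm_num [hs]
    have has : 1 ≤ a ^ s := by
      apply Real.one_le_rpow ha
      positivity
    rw [hrec k hk, hek]
    have hbound : max b (Real.sqrt (1 + b * η k)) ≤ 4 * b * a ^ s := by
      apply max_le
      · nlinarith
      · have h1 : 1 + b * η k ≤ (4*b*a^s)^2 := by 
          have ih2 : η k ≤ 8*b*(a^s)^2 := hs2 ▸ ih
          nlinarith [mul_le_mul_of_nonneg_left ih2 (by linarith : (0:ℝ) ≤ b), mul_le_mul has has (by linarith) (by linarith), mul_le_mul hb hb (by linarith) (by linarith), sq_nonneg (b*a^s - 1)]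
        calc Real.sqrt (1 + b * η k) ≤ Real.sqrt ((4*b*a^s)^2) :=
              Real.sqrt_le_sqrt h1
          _ = 4*b*a^s := Real.sqrt_sq (by nlinarith)
    linarith
end
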